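/- arXiv:2106.10611 — 2 statements merged into one kernel-verified Lean document; each statement's English description precedes it below -/
import Mathlib

section
/- Let β ∈ (-1,1) and let (σ_N^{(i)})_{i∈I} be a family of symmetric permutations of [N]², and set M_N^{(i)} = W_N^{σ_N^{(i)}}. Fix i,i' ∈ I and suppose that: (1) lim_{N→∞} (1/N²) Σ over pairs (j,k) ∈ [N]² with j ≠ k of E[X_N(σ_N^{(i)}(k,j))·X_N(σ_N^{(i')}(j,k))] = K(i,i') (the limit of the injective traffic distribution of the two-vertex test graph with an opposing pair of edges labeled i and i'); and (2) lim_{N→∞} (1/N²) Σ over pairs (j,k) ∈ [N]² with j ≠ k of E[X_N(σ_N^{(i)}(k,j))·X_N(σ_N^{(i')}(k,j))] = J(i,i') (the congruent analogue). Then lim_{N→∞} #FP((σ_N^{(i')})⁻¹ ∘ σ_N^{(i)})/N² = (K(i,i') − β·J(i,i'))/(1 − β²) and lim_{N→∞} #TP((σ_N^{(i')})⁻¹ ∘ σ_N^{(i)})/N² = (−β·K(i,i') + J(i,i'))/(1 − β²). -/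
open MeasureTheory Filter Finset

noncomputable section

namespace PermutedWigner

/-! ### Permutations of `[N]²` -/

/-- A permutation of `[N]²` is symmetric if it commutes with the transpose. -/
def SymmPerm {N : ℕ} (σ : Equiv.Perm (Fin N × Fin N)) : Prop :=
  ∀ p : Fin N × Fin N, σ (p.2, p.1) = ((σ p).2, (σ p).1)

/-- The set of fixed entries of a permutation of `[N]²`. -/
def FPset {N : ℕ} (σ : Equiv.Perm (Fin N × Fin N)) : Finset (Fin N × Fin N) :=
  univ.filter fun p => σ p = p

/-- The set of transposed entries of a permutation of `[N]²`. -/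
def TPset {N : ℕ} (σ : Equiv.Perm (Fin N × Fin N)) : Finset (Fin N × Fin N) :=
  univ.filter fun p => σ p = (p.2, p.1)

/-- The fixed entries in row `j`. -/
def FProw {N : ℕ} (σ : Equiv.Perm (Fin N × Fin N)) (j : Fin N) : Finset (Fin N) :=
  univ.filter fun k => σ (j, k) = (j, k)

/-- The transposed entries in row `j`. -/
def TProw {N : ℕ} (σ : Equiv.Perm (Fin N × Fin N)) (j : Fin N) : Finset (Fin N) :=
  univ.filter fun k => σ (j, k) = (k, j)

/-- The grid of an entry `(j,k)`: entries sharing a coordinate with `{j,k}`, except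
`(j,k)` and `(k,j)` themselves. -/
def GridPt {N : ℕ} (p : Fin N × Fin N) : Finset (Fin N × Fin N) :=
  (univ.filter fun q : Fin N × Fin N =>
      q.1 = p.1 ∨ q.1 = p.2 ∨ q.2 = p.1 ∨ q.2 = p.2) \ {p, (p.2, p.1)}

/-- The entries moved within their grid by `σ`. -/
def GridSet {N : ℕ} (σ : Equiv.Perm (Fin N × Fin N)) : Finset (Fin N × Fin N) :=
  univ.filter fun p => σ p ∈ GridPt p

/-- A sequence of permutations of `[N]²` stays off the grid if `#Grid(σ_N) = o(N²)`. -/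
def StaysOffGrid (σ : (N : ℕ) → Equiv.Perm (Fin N × Fin N)) : Prop :=
  Tendsto (fun N : ℕ => ((GridSet (σ N)).card : ℝ) / (N : ℝ) ^ 2) atTop (nhds 0)

/-- `lim_N max_{j∈[N]} f_N(j)/N = lim_N min_{j∈[N]} f_N(j)/N = a`, formulated as uniform
convergence of the row quantities `f_N(j)/N` to `a`. -/
def RowLimit (f : (N : ℕ) → Fin N → ℝ) (a : ℝ) : Prop :=
  ∀ ε > 0, ∀ᶠ N : ℕ in atTop, ∀ j : Fin N, |f N j / (N : ℝ) - a| < ε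

/-! ### Wigner matrices -/

/-- The data of a Wigner matrix ensemble with pseudovariance `β`: independent entries on and
above the diagonal, conjugate-symmetric entries, centered off-diagonal entries of unit variance
and pseudovariance `β`, real diagonal entries, and uniformly bounded moments of all orders. -/
structure WignerData (Ω : Type) [MeasureSpace Ω] (β : ℂ) where
  X : (N : ℕ) → Fin N × Fin N → Ω → ℂ
  m : ℕ → ℝ
  meas : ∀ N p, Measurable (X N p)
  indep : ∀ N : ℕ, ProbabilityTheory.iIndepFun
    (fun p : { p : Fin N × Fin N // p.1 ≤ p.2 } => X N p.val) volume
  conj_symm : ∀ (N : ℕ) (p : Fin N × Fin N) (ω : Ω),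
    X N (p.2, p.1) ω = (starRingEnd ℂ) (X N p ω)
  centered : ∀ (N : ℕ) (j k : Fin N), j < k → ∫ ω, X N (j, k) ω = 0
  variance : ∀ (N : ℕ) (j k : Fin N), j < k → ∫ ω, ‖X N (j, k) ω‖ ^ 2 = 1
  pseudovariance : ∀ (N : ℕ) (j k : Fin N), j < k → ∫ ω, (X N (j, k) ω) ^ 2 = β
  diag_real : ∀ (N : ℕ) (j : Fin N) (ω : Ω), (X N (j, j) ω).im = 0
  integrable_pow : ∀ (N : ℕ) (p : Fin N × Fin N) (ℓ : ℕ),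
    Integrable fun ω => ‖X N p ω‖ ^ ℓ
  moment_bound : ∀ (ℓ : ℕ) (N : ℕ) (p : Fin N × Fin N), (∫ ω, ‖X N p ω‖ ^ ℓ) ≤ m ℓ

variable {Ω : Type} [MeasureSpace Ω] {β : ℂ}

/-- The Wigner matrix `W_N(j,k) = X_N(j,k)/√N`. -/
def Wmat (D : WignerData Ω β) (N : ℕ) (ω : Ω) : Matrix (Fin N) (Fin N) ℂ :=
  fun j k => D.X N (j, k) ω / (Real.sqrt N : ℂ)

/-- The permuted Wigner matrix `W_N^σ(j,k) = W_N(σ(j,k))`. -/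
def WmatPerm (D : WignerData Ω β) (N : ℕ) (σ : Equiv.Perm (Fin N × Fin N)) (ω : Ω) :
    Matrix (Fin N) (Fin N) ℂ :=
  fun j k => Wmat D N ω (σ (j, k)).1 (σ (j, k)).2

/-! ### Test graphs and traffic distributions -/

/-- A test graph in `I`: a finite connected multidigraph with edges labeled by `I`. -/
structure TestGraph (I : Type) where
  V : Type
  E : Type
  fintypeV : Fintype V
  decEqV : DecidableEq V
  fintypeE : Fintype E
  nonemptyV : Nonempty V
  src : E → V
  tar : E → V
  lab : E → I
  connected : ∀ v w : V, Relation.ReflTransGen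
    (fun a b => ∃ e, (src e = a ∧ tar e = b) ∨ (src e = b ∧ tar e = a)) v w

attribute [instance] TestGraph.fintypeV TestGraph.decEqV TestGraph.fintypeE TestGraph.nonemptyV

variable {I : Type}

/-- The injective traffic distribution
`ν⁰_N[T] = (1/N) Σ_{φ : V ↪ [N]} E[∏_{e∈E} A^{γ(e)}(φ(tar e), φ(src e))]`. -/
def nu0 (T : TestGraph I) {N : ℕ} (A : I → Ω → Matrix (Fin N) (Fin N) ℂ) : ℂ :=
  (N : ℂ)⁻¹ * ∑ φ : T.V ↪ Fin N, ∫ ω, ∏ e : T.E, A (T.lab e) ω (φ (T.tar e)) (φ (T.src e))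

/-- Two edges have the same endpoints (as an unordered pair). -/
def SameEnds (T : TestGraph I) (e e' : T.E) : Prop :=
  (T.src e' = T.src e ∧ T.tar e' = T.tar e) ∨ (T.src e' = T.tar e ∧ T.tar e' = T.src e)

/-- The underlying undirected simple graph of a test graph. -/
def underlying (T : TestGraph I) : SimpleGraph T.V where
  Adj v w := v ≠ w ∧ ∃ e, (T.src e = v ∧ T.tar e = w) ∨ (T.src e = w ∧ T.tar e = v)
  symm := ⟨by
    rintro v w ⟨hvw, e, h | h⟩
    · exact ⟨hvw.symm, e, Or.inr h⟩
    · exact ⟨hvw.symm, e, Or.inl h⟩⟩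
  loopless := ⟨by rintro v ⟨h, -⟩; exact h rfl⟩

open scoped Classical in
/-- A double tree: no loops, the underlying simple graph is a tree, and every pair of
adjacent vertices is joined by exactly two directed edges. -/
def IsDoubleTree (T : TestGraph I) : Prop :=
  (∀ e : T.E, T.src e ≠ T.tar e) ∧
  (∀ e : T.E, (univ.filter fun e' => SameEnds T e e').card = 2) ∧
  (underlying T).IsTree

/-- `t` pairs each edge with its twin. -/
def IsTwinInvolution (T : TestGraph I) (t : T.E → T.E) : Prop :=
  ∀ e, t e ≠ e ∧ t (t e) = e ∧ SameEnds T e (t e)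

/-- `S` selects exactly one edge from each twin pair of the pairing `t`. -/
def IsTwinSection (T : TestGraph I) (t : T.E → T.E) (S : Finset T.E) : Prop :=
  ∀ e, e ∈ S ↔ t e ∉ S

/-! ### Moments and noncrossing pairings -/

/-- `E[tr(A_1 ⋯ A_n)]`, the expected normalized trace of a word of random matrices. -/
def expTrWord {N n : ℕ} (A : Fin n → Ω → Matrix (Fin N) (Fin N) ℂ) : ℂ :=
  (N : ℂ)⁻¹ * ∫ ω, ((List.ofFn fun k => A k ω).prod).trace

open scoped Classical in
/-- `Σ_{π ∈ NC₂(n)} ∏_{{j,k} ∈ π} c(j,k)`: the sum over noncrossing pair partitions of `[n]`,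
encoded as fixed-point-free noncrossing involutions. -/
def ncSum (n : ℕ) (c : Fin n → Fin n → ℂ) : ℂ :=
  ∑ π : Equiv.Perm (Fin n),
    if (∀ j, π j ≠ j) ∧ (∀ j, π (π j) = j) ∧
        ¬∃ a b : Fin n, a < b ∧ b < π a ∧ π a < π b then
      ∏ j ∈ univ.filter fun j => j < π j, c j (π j)
    else 0

/-- The triple set in Popa's sufficient condition:
`{(j,k,l) : σ(j,k) ∈ {σ'(j,l), σ'(l,k)}}`. -/
def PopaSet {N : ℕ} (σ σ' : Equiv.Perm (Fin N × Fin N)) :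
    Finset (Fin N × Fin N × Fin N) :=
  univ.filter fun t =>
    σ (t.1, t.2.1) = σ' (t.1, t.2.2) ∨ σ (t.1, t.2.1) = σ' (t.2.2, t.2.1)

/-- A pair of sequences of random matrices converges in distribution to a semicircular family
of covariance `K`: all limiting mixed normalized-trace moments are given by sums over
noncrossing pair partitions of products of the corresponding covariance entries. -/
def ConvergesToSemicircular (M : (N : ℕ) → Fin 2 → Ω → Matrix (Fin N) (Fin N) ℂ)
    (K : Fin 2 → Fin 2 → ℝ) : Prop :=
  ∀ n : ℕ, 1 ≤ n → ∀ i : Fin n → Fin 2,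
    Tendsto (fun N : ℕ => expTrWord (fun k => M N (i k))) atTop
      (nhds (ncSum n fun j k => ((K (i j) (i k) : ℝ) : ℂ)))

/-- The permutation `ρ_N` fixing entries whose (1-based) max coordinate is odd and transposing
entries whose max coordinate is even. -/
def rho (N : ℕ) : Equiv.Perm (Fin N × Fin N) :=
  Function.Involutive.toPerm
    (fun p => if (max p.1.val p.2.val + 1) % 2 = 1 then p else (p.2, p.1))
    (by
      intro p
      dsimp only
      by_cases h : (max p.1.val p.2.val + 1) % 2 = 1
      · simp [h]
      · have h2 : ¬(max p.2.val p.1.val + 1) % 2 = 1 := by rw [max_comm]; exact h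
        simp [h, h2])

/-- The permutation `ζ_{N,n}` fixing entries with (1-based) `j + k ≡ 0 (mod n)` and transposing
all other entries. -/
def zeta (n N : ℕ) : Equiv.Perm (Fin N × Fin N) :=
  Function.Involutive.toPerm
    (fun p => if (p.1.val + p.2.val + 2) % n = 0 then p else (p.2, p.1))
    (by
      intro p
      dsimp only
      by_cases h : (p.1.val + p.2.val + 2) % n = 0
      · simp [h]
      · have h2 : ¬(p.2.val + p.1.val + 2) % n = 0 := by rw [Nat.add_comm p.2.val]; exact h
        simp [h, h2])

/-- The anti-diagonal transpose `(j,k) ↦ (N+1-k, N+1-j)` (1-based). -/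
def adt (N : ℕ) : Equiv.Perm (Fin N × Fin N) :=
  Function.Involutive.toPerm
    (fun p => (⟨N - 1 - p.2.val, by have := p.2.isLt; omega⟩,
               ⟨N - 1 - p.1.val, by have := p.1.isLt; omega⟩))
    (by
      intro p
      obtain ⟨⟨a, ha⟩, ⟨b, hb⟩⟩ := p
      simp only [Prod.ext_iff, Fin.ext_iff]
      omega)

/-- The defining equations (in 1-based coordinates) of the permutation `η_N` of Remark 3.4. -/
def EtaEquations (η : (N : ℕ) → Equiv.Perm (Fin N × Fin N)) : Prop :=
  ∀ N : ℕ,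
    (∀ (j k : Fin N) (_h1 : j.val + 1 < k.val) (_h2 : Even k.val),
      η N (j, k) = (k, ⟨j.val + 1, by have := k.isLt; omega⟩)) ∧
    (∀ (j k : Fin N) (_h1 : j.val + 1 = k.val) (_h2 : Even k.val),
      η N (j, k) = (k, ⟨0, by have := k.isLt; omega⟩)) ∧
    (∀ (j k : Fin N) (_h1 : 0 < j.val) (_h2 : j.val < k.val) (_h3 : Odd k.val),
      η N (j, k) = (k, ⟨j.val - 1, by have := k.isLt; omega⟩)) ∧
    (∀ (j k : Fin N) (_h1 : j.val = 0) (_h2 : j.val < k.val) (_h3 : Odd k.val),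
      η N (j, k) = (k, ⟨k.val - 1, by have := k.isLt; omega⟩)) ∧
    (∀ (j : Fin N) (_h : j.val + 1 < N),
      η N (j, j) = (⟨j.val + 1, by omega⟩, ⟨j.val + 1, by omega⟩)) ∧
    (∀ (j : Fin N) (_h : j.val + 1 = N),
      η N (j, j) = (⟨0, by have := j.isLt; omega⟩, ⟨0, by have := j.isLt; omega⟩)) ∧
    (∀ p : Fin N × Fin N, η N (p.2, p.1) = ((η N p).2, (η N p).1))

section Aux

open ProbabilityTheory

variable [IsProbabilityMeasure (volume : Measure Ω)]

lemma integral_mul_of_indepFun {f g : Ω → ℂ} (h : IndepFun f g volume)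
    (hf : Measurable f) (hg : Measurable g) :
    ∫ ω, f ω * g ω = (∫ ω, f ω) * ∫ ω, g ω := by
  have hmap : Measure.map (fun ω => (f ω, g ω)) (volume : Measure Ω)
      = (Measure.map f volume).prod (Measure.map g volume) :=
    (indepFun_iff_map_prod_eq_prod_map_map hf.aemeasurable hg.aemeasurable).mp h
  have h1 : IsProbabilityMeasure (Measure.map f (volume : Measure Ω)) :=
    Measure.isProbabilityMeasure_map hf.aemeasurable
  have h2 : IsProbabilityMeasure (Measure.map g (volume : Measure Ω)) :=
    Measure.isProbabilityMeasure_map hg.aemeasurable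
  have e1 : ∫ ω, f ω * g ω
      = ∫ z : ℂ × ℂ, z.1 * z.2 ∂(Measure.map (fun ω => (f ω, g ω)) volume) := by
    exact (integral_map (hf.aemeasurable.prodMk hg.aemeasurable) (f := fun z : ℂ × ℂ => z.1 * z.2)
      (measurable_fst.mul measurable_snd).aestronglyMeasurable).symm
  rw [e1, hmap, integral_prod_mul (f := fun x : ℂ => x) (g := fun x : ℂ => x)]
  congr 1
  · exact integral_map hf.aemeasurable aestronglyMeasurable_id
  · exact integral_map hg.aemeasurable aestronglyMeasurable_id



lemma X_star (D : WignerData Ω β) (N : ℕ) (q : Fin N × Fin N) :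
    D.X N q = (fun z : ℂ => star z) ∘ D.X N (q.2, q.1) := by
  funext ω
  exact D.conj_symm N (q.2, q.1) ω

lemma integrable_X (D : WignerData Ω β) (N : ℕ) (p : Fin N × Fin N) :
    Integrable (D.X N p) := by
  have h := D.integrable_pow N p 1
  simp only [pow_one] at h
  exact (integrable_norm_iff (D.meas N p).aestronglyMeasurable).mp h

lemma integrable_X_mul_X (D : WignerData Ω β) (N : ℕ) (p q : Fin N × Fin N) :
    Integrable (fun ω => D.X N p ω * D.X N q ω) := by
  refine Integrable.mono' ((D.integrable_pow N p 2).add (D.integrable_pow N q 2))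
    ((D.meas N p).mul (D.meas N q)).aestronglyMeasurable
    (Filter.Eventually.of_forall fun ω => ?_)
  rw [norm_mul, Pi.add_apply]
  nlinarith [norm_nonneg (D.X N p ω), norm_nonneg (D.X N q ω),
    sq_nonneg (‖D.X N p ω‖ - ‖D.X N q ω‖)]

lemma integral_X_eq_zero (D : WignerData Ω β) (N : ℕ) (q : Fin N × Fin N)
    (hq : q.1 ≠ q.2) : ∫ ω, D.X N q ω = 0 := by
  rcases lt_or_gt_of_ne hq with h | h
  · simpa using D.centered N q.1 q.2 h
  · have e : ∀ ω, D.X N q ω = (starRingEnd ℂ) (D.X N (q.2, q.1) ω) :=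
      fun ω => D.conj_symm N (q.2, q.1) ω
  -- rewrite and use integral_conj
    simp only [e]
    rw [integral_conj, D.centered N q.2 q.1 h, map_zero]

lemma indepFun_X (D : WignerData Ω β) (N : ℕ) (r s : Fin N × Fin N)
    (hr : r.1 ≠ r.2) (hs : s.1 ≠ s.2) (h1 : s ≠ r) (h2 : s ≠ (r.2, r.1)) :
    IndepFun (D.X N r) (D.X N s) volume := by
  have key : ∀ a b : Fin N × Fin N, a.1 ≤ a.2 → b.1 ≤ b.2 → a ≠ b →
      IndepFun (D.X N a) (D.X N b) volume := fun a b ha hb hab =>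
    (D.indep N).indepFun (i := ⟨a, ha⟩) (j := ⟨b, hb⟩) (by simpa using hab)
  rcases lt_or_gt_of_ne hr with hr1 | hr1 <;> rcases lt_or_gt_of_ne hs with hs1 | hs1
  · exact key r s hr1.le hs1.le (fun e => h1 e.symm)
  · -- s lower
    have hne : r ≠ (s.2, s.1) := by
      intro e
      apply h2
      rw [e]
    have h' := (key r (s.2, s.1) hr1.le hs1.le hne).comp measurable_id continuous_star.measurable
    rw [X_star D N s]
    simpa using h'
  · -- r lower
    have hne : (r.2, r.1) ≠ s := by
      intro e
      exact h2 e.symm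
    have h' := (key (r.2, r.1) s hr1.le hs1.le hne).comp continuous_star.measurable measurable_id
    rw [X_star D N r]
    simpa using h'
  · have hne : (r.2, r.1) ≠ (s.2, s.1) := by
      intro e
      apply h1
      have e1 : r.2 = s.2 := congrArg Prod.fst e
      have e2 : r.1 = s.1 := congrArg Prod.snd e
      exact Prod.ext_iff.mpr ⟨e2.symm, e1.symm⟩
    have h' := (key (r.2, r.1) (s.2, s.1) hr1.le hs1.le hne).comp continuous_star.measurable continuous_star.measurable
    rw [X_star D N r, X_star D N s]
    exact h'

lemma integral_pair {γ : ℝ} (D : WignerData Ω ((γ : ℝ) : ℂ)) (N : ℕ)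
    (r s : Fin N × Fin N) (hr : r.1 ≠ r.2) (hs : s.1 ≠ s.2) :
    ∫ ω, D.X N r ω * D.X N s ω
      = if s = (r.2, r.1) then 1 else if s = r then ((γ : ℝ) : ℂ) else 0 := by
  by_cases h1 : s = (r.2, r.1)
  · subst h1
    rw [if_pos rfl]
    have hx : ∀ ω, D.X N r ω * D.X N (r.2, r.1) ω = ((‖D.X N r ω‖ ^ 2 : ℝ) : ℂ) := by
      intro ω
      rw [D.conj_symm N r ω, Complex.mul_conj, Complex.normSq_eq_norm_sq]
    simp only [hx]
    rw [show (∫ ω, ((‖D.X N r ω‖ ^ 2 : ℝ) : ℂ)) = (((∫ ω, ‖D.X N r ω‖ ^ 2 : ℝ)) : ℂ)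
      from integral_ofReal]
    norm_cast
    rcases lt_or_gt_of_ne hr with h | h
    · simpa using D.variance N r.1 r.2 h
    · have e : ∀ ω, ‖D.X N r ω‖ = ‖D.X N (r.2, r.1) ω‖ := fun ω => by
        rw [show D.X N r ω = (starRingEnd ℂ) (D.X N (r.2, r.1) ω)
          from D.conj_symm N (r.2, r.1) ω, RCLike.norm_conj]
      simp only [e]
      exact D.variance N r.2 r.1 h
  · by_cases h2 : s = r
    · subst h2
      rw [if_neg h1, if_pos rfl]
      rcases lt_or_gt_of_ne hs with h | h
      · have := D.pseudovariance N s.1 s.2 h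
        simpa [pow_two] using this
      · have e : ∀ ω, D.X N s ω * D.X N s ω
            = (starRingEnd ℂ) (D.X N (s.2, s.1) ω * D.X N (s.2, s.1) ω) := by
          intro ω
          have := D.conj_symm N (s.2, s.1) ω
          simp only [this]
          rw [map_mul]
        simp only [e]
        rw [integral_conj]
        have := D.pseudovariance N s.2 s.1 h
        rw [show (fun ω => D.X N (s.2, s.1) ω * D.X N (s.2, s.1) ω)
            = fun ω => D.X N (s.2, s.1) ω ^ 2 from funext fun ω => (sq _).symm, this]
        exact Complex.conj_ofReal γ
    · rw [if_neg h1, if_neg h2]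
      rw [integral_mul_of_indepFun (indepFun_X D N r s hr hs h2 h1)
        (D.meas N r) (D.meas N s)]
      rw [integral_X_eq_zero D N r hr, zero_mul]

end Aux



section Sums

open ProbabilityTheory

variable [IsProbabilityMeasure (volume : Measure Ω)]

lemma symm_offdiag {N : ℕ} {σ : Equiv.Perm (Fin N × Fin N)} (h : SymmPerm σ)
    {p : Fin N × Fin N} (hp : p.1 ≠ p.2) : (σ p).1 ≠ (σ p).2 := by
  intro e
  apply hp
  have h2 : σ (p.2, p.1) = σ p := by
    rw [h p]
    exact Prod.ext_iff.mpr ⟨e.symm, e⟩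
  have h3 := σ.injective h2
  exact (congrArg Prod.fst h3).symm

lemma sum_identity_K {γ : ℝ} (D : WignerData Ω ((γ : ℝ) : ℂ)) {N : ℕ}
    (σ1 σ2 : Equiv.Perm (Fin N × Fin N)) (h1 : SymmPerm σ1) (h2 : SymmPerm σ2) :
    (∑ p ∈ univ.filter fun p : Fin N × Fin N => p.1 ≠ p.2,
        ∫ ω, D.X N (σ1 (p.2, p.1)) ω * D.X N (σ2 (p.1, p.2)) ω)
      = (((univ.filter fun p : Fin N × Fin N => p.1 ≠ p.2).filter
            fun p => (σ2⁻¹ * σ1) p = p).card : ℂ)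
        + ((γ : ℝ) : ℂ) * (((univ.filter fun p : Fin N × Fin N => p.1 ≠ p.2).filter
            fun p => (σ2⁻¹ * σ1) p = (p.2, p.1)).card : ℂ) := by
  have step : ∀ p ∈ univ.filter fun p : Fin N × Fin N => p.1 ≠ p.2,
      (∫ ω, D.X N (σ1 (p.2, p.1)) ω * D.X N (σ2 (p.1, p.2)) ω)
        = (if (σ2⁻¹ * σ1) p = p then (1 : ℂ) else 0)
          + ((γ : ℝ) : ℂ) * (if (σ2⁻¹ * σ1) p = (p.2, p.1) then (1 : ℂ) else 0) := by
    intro p hp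
    have hpd : p.1 ≠ p.2 := (mem_filter.mp hp).2
    have hq := symm_offdiag h1 hpd
    have hq' := symm_offdiag h2 hpd
    rw [show σ1 (p.2, p.1) = ((σ1 p).2, (σ1 p).1) from h1 p,
      show σ2 (p.1, p.2) = σ2 p from rfl,
      integral_pair D N ((σ1 p).2, (σ1 p).1) (σ2 p) (Ne.symm hq) hq']
    have cond1 : (σ2 p = (((σ1 p).2, (σ1 p).1).2, ((σ1 p).2, (σ1 p).1).1))
        ↔ ((σ2⁻¹ * σ1) p = p) := by
      rw [Equiv.Perm.mul_apply, Equiv.Perm.inv_eq_iff_eq]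
      exact eq_comm
    have cond2 : (σ2 p = ((σ1 p).2, (σ1 p).1)) ↔ ((σ2⁻¹ * σ1) p = (p.2, p.1)) := by
      rw [Equiv.Perm.mul_apply, Equiv.Perm.inv_eq_iff_eq, h2 p]
      constructor
      · intro e; rw [e]
      · intro e; rw [e]
    by_cases hA : (σ2⁻¹ * σ1) p = p
    · have hB : (σ2⁻¹ * σ1) p ≠ (p.2, p.1) := by
        rw [hA]
        intro e
        exact hpd (congrArg Prod.fst e)
      rw [if_pos (cond1.mpr hA), if_pos hA, if_neg hB]
      ring
    · by_cases hB : (σ2⁻¹ * σ1) p = (p.2, p.1)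
      · rw [if_neg (fun e => hA (cond1.mp e)), if_pos (cond2.mpr hB), if_neg hA, if_pos hB]
        ring
      · rw [if_neg (fun e => hA (cond1.mp e)), if_neg (fun e => hB (cond2.mp e)),
          if_neg hA, if_neg hB]
        ring
  rw [Finset.sum_congr rfl step, Finset.sum_add_distrib, ← Finset.mul_sum,
    Finset.sum_boole, Finset.sum_boole]

lemma sum_identity_J {γ : ℝ} (D : WignerData Ω ((γ : ℝ) : ℂ)) {N : ℕ}
    (σ1 σ2 : Equiv.Perm (Fin N × Fin N)) (h1 : SymmPerm σ1) (h2 : SymmPerm σ2) :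
    (∑ p ∈ univ.filter fun p : Fin N × Fin N => p.1 ≠ p.2,
        ∫ ω, D.X N (σ1 (p.2, p.1)) ω * D.X N (σ2 (p.2, p.1)) ω)
      = ((γ : ℝ) : ℂ) * (((univ.filter fun p : Fin N × Fin N => p.1 ≠ p.2).filter
            fun p => (σ2⁻¹ * σ1) p = p).card : ℂ)
        + (((univ.filter fun p : Fin N × Fin N => p.1 ≠ p.2).filter
            fun p => (σ2⁻¹ * σ1) p = (p.2, p.1)).card : ℂ) := by
  have step : ∀ p ∈ univ.filter fun p : Fin N × Fin N => p.1 ≠ p.2,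
      (∫ ω, D.X N (σ1 (p.2, p.1)) ω * D.X N (σ2 (p.2, p.1)) ω)
        = ((γ : ℝ) : ℂ) * (if (σ2⁻¹ * σ1) p = p then (1 : ℂ) else 0)
          + (if (σ2⁻¹ * σ1) p = (p.2, p.1) then (1 : ℂ) else 0) := by
    intro p hp
    have hpd : p.1 ≠ p.2 := (mem_filter.mp hp).2
    have hq := symm_offdiag h1 hpd
    have hq' := symm_offdiag h2 hpd
    rw [show σ1 (p.2, p.1) = ((σ1 p).2, (σ1 p).1) from h1 p,
      show σ2 (p.2, p.1) = ((σ2 p).2, (σ2 p).1) from h2 p,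
      integral_pair D N ((σ1 p).2, (σ1 p).1) ((σ2 p).2, (σ2 p).1) (Ne.symm hq) (Ne.symm hq')]
    have cond1 : (((σ2 p).2, (σ2 p).1) = (((σ1 p).2, (σ1 p).1).2, ((σ1 p).2, (σ1 p).1).1))
        ↔ ((σ2⁻¹ * σ1) p = (p.2, p.1)) := by
      rw [Equiv.Perm.mul_apply, Equiv.Perm.inv_eq_iff_eq, h2 p]
      constructor
      · intro e; rw [e]
      · intro e; rw [e]
    have cond2 : (((σ2 p).2, (σ2 p).1) = ((σ1 p).2, (σ1 p).1)) ↔ ((σ2⁻¹ * σ1) p = p) := by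
      rw [Equiv.Perm.mul_apply, Equiv.Perm.inv_eq_iff_eq]
      constructor
      · intro e
        exact Prod.ext_iff.mpr ⟨(congrArg Prod.snd e).symm, (congrArg Prod.fst e).symm⟩
      · intro e; rw [e]
    by_cases hA : (σ2⁻¹ * σ1) p = p
    · have hB : (σ2⁻¹ * σ1) p ≠ (p.2, p.1) := by
        rw [hA]
        intro e
        exact hpd (congrArg Prod.fst e)
      rw [if_neg (fun e => hB (cond1.mp e)), if_pos (cond2.mpr hA), if_pos hA, if_neg hB]
      ring
    · by_cases hB : (σ2⁻¹ * σ1) p = (p.2, p.1)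
      · rw [if_pos (cond1.mpr hB), if_neg hA, if_pos hB]
        ring
      · rw [if_neg (fun e => hB (cond1.mp e)), if_neg (fun e => hA (cond2.mp e)),
          if_neg hA, if_neg hB]
        ring
  rw [Finset.sum_congr rfl step, Finset.sum_add_distrib, ← Finset.mul_sum,
    Finset.sum_boole, Finset.sum_boole]

lemma card_filter_diag_le {N : ℕ} (s : Finset (Fin N × Fin N))
    (h : ∀ p ∈ s, p.1 = p.2) : s.card ≤ N := by
  calc s.card ≤ (univ : Finset (Fin N)).card := by
        apply Finset.card_le_card_of_injOn Prod.fst (fun p _ => mem_univ _)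
        intro p hp q hq e
        exact Prod.ext_iff.mpr ⟨e, by rw [← h p hp, ← h q hq, e]⟩
    _ = N := by simp

end Sums



theorem statement10
    {Ω : Type} [MeasureSpace Ω] [IsProbabilityMeasure (volume : Measure Ω)] {I : Type}
    (β : ℝ) (hβ : β ∈ Set.Ioo (-1 : ℝ) 1) (D : WignerData Ω (β : ℂ))
    (σ : I → (N : ℕ) → Equiv.Perm (Fin N × Fin N))
    (hsymm : ∀ (i : I) (N : ℕ), SymmPerm (σ i N))
    (i i' : I) (K J : ℂ)
    (hK : Tendsto (fun N : ℕ => ((N : ℂ) ^ 2)⁻¹ *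
        ∑ p ∈ univ.filter fun p : Fin N × Fin N => p.1 ≠ p.2,
          ∫ ω, D.X N (σ i N (p.2, p.1)) ω * D.X N (σ i' N (p.1, p.2)) ω) atTop (nhds K))
    (hJ : Tendsto (fun N : ℕ => ((N : ℂ) ^ 2)⁻¹ *
        ∑ p ∈ univ.filter fun p : Fin N × Fin N => p.1 ≠ p.2,
          ∫ ω, D.X N (σ i N (p.2, p.1)) ω * D.X N (σ i' N (p.2, p.1)) ω) atTop (nhds J)) :
    Tendsto (fun N : ℕ => ((FPset ((σ i' N)⁻¹ * σ i N)).card : ℂ) / (N : ℂ) ^ 2) atTop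
      (nhds ((K - (β : ℂ) * J) / (1 - (β : ℂ) ^ 2))) ∧
    Tendsto (fun N : ℕ => ((TPset ((σ i' N)⁻¹ * σ i N)).card : ℂ) / (N : ℂ) ^ 2) atTop
      (nhds ((-(β : ℂ) * K + J) / (1 - (β : ℂ) ^ 2))) := by
  have hβ2 : (1 : ℂ) - (β : ℂ) ^ 2 ≠ 0 := by
    have h1 : β ^ 2 < 1 := by nlinarith [hβ.1, hβ.2]
    intro e
    have e2 : ((1 - β ^ 2 : ℝ) : ℂ) = 0 := by push_cast; linear_combination e
    rw [Complex.ofReal_eq_zero] at e2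
    linarith
  set a : ℕ → ℕ := fun N =>
    ((univ.filter fun p : Fin N × Fin N => p.1 ≠ p.2).filter
      fun p => ((σ i' N)⁻¹ * σ i N) p = p).card with ha
  set b : ℕ → ℕ := fun N =>
    ((univ.filter fun p : Fin N × Fin N => p.1 ≠ p.2).filter
      fun p => ((σ i' N)⁻¹ * σ i N) p = (p.2, p.1)).card with hb
  have hKid : ∀ N : ℕ, (∑ p ∈ univ.filter fun p : Fin N × Fin N => p.1 ≠ p.2,
      ∫ ω, D.X N (σ i N (p.2, p.1)) ω * D.X N (σ i' N (p.1, p.2)) ω)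
      = (a N : ℂ) + (β : ℂ) * (b N : ℂ) := fun N =>
    sum_identity_K D (σ i N) (σ i' N) (hsymm i N) (hsymm i' N)
  have hJid : ∀ N : ℕ, (∑ p ∈ univ.filter fun p : Fin N × Fin N => p.1 ≠ p.2,
      ∫ ω, D.X N (σ i N (p.2, p.1)) ω * D.X N (σ i' N (p.2, p.1)) ω)
      = (β : ℂ) * (a N : ℂ) + (b N : ℂ) := fun N =>
    sum_identity_J D (σ i N) (σ i' N) (hsymm i N) (hsymm i' N)
  have haT : Tendsto (fun N : ℕ => (a N : ℂ) / (N : ℂ) ^ 2) atTop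
      (nhds ((K - (β : ℂ) * J) / (1 - (β : ℂ) ^ 2))) := by
    refine ((hK.sub (hJ.const_mul (β : ℂ))).div_const ((1 : ℂ) - (β : ℂ) ^ 2)).congr fun N => ?_
    rw [hKid N, hJid N,
      show ((N : ℂ) ^ 2)⁻¹ * ((a N : ℂ) + (β : ℂ) * (b N : ℂ))
          - (β : ℂ) * (((N : ℂ) ^ 2)⁻¹ * ((β : ℂ) * (a N : ℂ) + (b N : ℂ)))
        = ((a N : ℂ) / (N : ℂ) ^ 2) * ((1 : ℂ) - (β : ℂ) ^ 2) from by ring,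
      mul_div_assoc, div_self hβ2, mul_one]
  have hbT : Tendsto (fun N : ℕ => (b N : ℂ) / (N : ℂ) ^ 2) atTop
      (nhds ((-(β : ℂ) * K + J) / (1 - (β : ℂ) ^ 2))) := by
    have e0 : ((J - (β : ℂ) * K) / (1 - (β : ℂ) ^ 2))
        = ((-(β : ℂ) * K + J) / (1 - (β : ℂ) ^ 2)) := by ring
    refine e0 ▸ (((hJ.sub (hK.const_mul (β : ℂ))).div_const
      ((1 : ℂ) - (β : ℂ) ^ 2)).congr fun N => ?_)
    rw [hKid N, hJid N,
      show ((N : ℂ) ^ 2)⁻¹ * ((β : ℂ) * (a N : ℂ) + (b N : ℂ))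
          - (β : ℂ) * (((N : ℂ) ^ 2)⁻¹ * ((a N : ℂ) + (β : ℂ) * (b N : ℂ)))
        = ((b N : ℂ) / (N : ℂ) ^ 2) * ((1 : ℂ) - (β : ℂ) ^ 2) from by ring,
      mul_div_assoc, div_self hβ2, mul_one]
  -- diagonal corrections
  have key : ∀ (c : ℕ → ℕ), (∀ N, c N ≤ N) →
      Tendsto (fun N : ℕ => (c N : ℂ) / (N : ℂ) ^ 2) atTop (nhds 0) := by
    intro c hc
    apply squeeze_zero_norm' (a := fun N : ℕ => (N : ℝ)⁻¹) ?_
      tendsto_inv_atTop_nhds_zero_nat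
    filter_upwards [eventually_ge_atTop 1] with N hN
    have hNpos : (0 : ℝ) < (N : ℝ) := by exact_mod_cast hN
    have e1 : ‖(c N : ℂ) / (N : ℂ) ^ 2‖ = (c N : ℝ) / (N : ℝ) ^ 2 := by
      rw [norm_div, norm_pow, Complex.norm_natCast, Complex.norm_natCast]
    rw [e1, div_le_iff₀ (by positivity)]
    calc (c N : ℝ) ≤ (N : ℝ) := by exact_mod_cast hc N
      _ = (N : ℝ)⁻¹ * (N : ℝ) ^ 2 := by
          field_simp
  constructor
  · have hsplit : ∀ N : ℕ, ((FPset ((σ i' N)⁻¹ * σ i N)).card : ℂ)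
        = (a N : ℂ) + (((FPset ((σ i' N)⁻¹ * σ i N)).filter
            fun p => ¬ p.1 ≠ p.2).card : ℂ) := by
      intro N
      rw [show (FPset ((σ i' N)⁻¹ * σ i N)).card
          = a N + ((FPset ((σ i' N)⁻¹ * σ i N)).filter fun p => ¬ p.1 ≠ p.2).card from ?_]
      · push_cast; ring
      · rw [← Finset.card_filter_add_card_filter_not
          (s := FPset ((σ i' N)⁻¹ * σ i N)) (p := fun p => p.1 ≠ p.2)]
        congr 1
        rw [ha]
        show ((univ.filter fun p : Fin N × Fin N => ((σ i' N)⁻¹ * σ i N) p = p).filter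
          fun p => p.1 ≠ p.2).card = _
        rw [Finset.filter_comm]
    have hcle : ∀ N : ℕ, ((FPset ((σ i' N)⁻¹ * σ i N)).filter
        fun p => ¬ p.1 ≠ p.2).card ≤ N := fun N =>
      card_filter_diag_le _ (fun p hp => not_not.mp (mem_filter.mp hp).2)
    have h0 := key _ hcle
    have hsum := haT.add h0
    rw [add_zero] at hsum
    refine hsum.congr fun N => ?_
    rw [hsplit N, add_div]
  · have hsplit : ∀ N : ℕ, ((TPset ((σ i' N)⁻¹ * σ i N)).card : ℂ)
        = (b N : ℂ) + (((TPset ((σ i' N)⁻¹ * σ i N)).filter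
            fun p => ¬ p.1 ≠ p.2).card : ℂ) := by
      intro N
      rw [show (TPset ((σ i' N)⁻¹ * σ i N)).card
          = b N + ((TPset ((σ i' N)⁻¹ * σ i N)).filter fun p => ¬ p.1 ≠ p.2).card from ?_]
      · push_cast; ring
      · rw [← Finset.card_filter_add_card_filter_not
          (s := TPset ((σ i' N)⁻¹ * σ i N)) (p := fun p => p.1 ≠ p.2)]
        congr 1
        rw [hb]
        show ((univ.filter fun p : Fin N × Fin N =>
            ((σ i' N)⁻¹ * σ i N) p = (p.2, p.1)).filter fun p => p.1 ≠ p.2).card = _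
        rw [Finset.filter_comm]
    have hcle : ∀ N : ℕ, ((TPset ((σ i' N)⁻¹ * σ i N)).filter
        fun p => ¬ p.1 ≠ p.2).card ≤ N := fun N =>
      card_filter_diag_le _ (fun p hp => not_not.mp (mem_filter.mp hp).2)
    have h0 := key _ hcle
    have hsum := hbT.add h0
    rw [add_zero] at hsum
    refine hsum.congr fun N => ?_
    rw [hsplit N, add_div]



end PermutedWigner
end
end

section
/- For n ∈ ℕ with n ≥ 1 and each N ∈ ℕ, define the permutation ζ_{N,n} of [N]² by ζ_{N,n}(j,k) = (j,k) if j + k ≡ 0 (mod n) and ζ_{N,n}(j,k) = (k,j) otherwise. Then ζ_{N,n} is a symmetric permutation of [N]² that is an involution, Grid(ζ_{N,n}) = ∅, and the row-homogeneous limits hold: lim_{N→∞} max_{j∈[N]} #FP(ζ_{N,n}, j)/N = lim_{N→∞} min_{j∈[N]} #FP(ζ_{N,n}, j)/N = 1/n and lim_{N→∞} max_{j∈[N]} #TP(ζ_{N,n}, j)/N = lim_{N→∞} min_{j∈[N]} #TP(ζ_{N,n}, j)/N = (n−1)/n. -/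
open MeasureTheory Filter Finset

noncomputable section

namespace PermutedWigner

variable {Ω : Type} [MeasureSpace Ω] {β : ℂ}

variable {I : Type}

lemma countUB (n a N : ℕ) (hn : 1 ≤ n) :
    n * ((Finset.range N).filter fun k => (k + a) % n = 0).card ≤ N + n := by
  have hcard : ((Finset.range N).filter fun k => (k + a) % n = 0).card ≤ N / n + 1 := by
    rw [← Finset.card_range (N / n + 1)]
    apply Finset.card_le_card_of_injOn (fun k => k / n)
    · intro k hk
      simp only [Finset.mem_coe, mem_filter, mem_range] at hk ⊢
      have := Nat.div_le_div_right (le_of_lt hk.1) (c := n)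
      omega
    · intro k₁ h₁ k₂ h₂ hdiv
      simp only [coe_filter, Set.mem_setOf_eq, mem_range] at h₁ h₂
      have hmod : k₁ % n = k₂ % n := by
        have e1 : (k₁ + a) ≡ (k₂ + a) [MOD n] := by
          unfold Nat.ModEq; rw [h₁.2, h₂.2]
        exact Nat.ModEq.add_right_cancel' a e1
      have d1 := Nat.div_add_mod k₁ n
      have d2 := Nat.div_add_mod k₂ n
      dsimp at hdiv
      rw [hdiv, hmod] at d1
      omega
  calc n * ((Finset.range N).filter fun k => (k + a) % n = 0).card
      ≤ n * (N / n + 1) := Nat.mul_le_mul_left n hcard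
    _ = n * (N / n) + n := by ring
    _ ≤ N + n := by have := Nat.div_add_mod N n; have := Nat.mod_lt N (show 0 < n by omega); omega

lemma countLB (n a N : ℕ) (hn : 1 ≤ n) :
    N ≤ n * ((Finset.range N).filter fun k => (k + a) % n = 0).card + n := by
  have hcard : N / n ≤ ((Finset.range N).filter fun k => (k + a) % n = 0).card := by
    rw [← Finset.card_range (N / n)]
    apply Finset.card_le_card_of_injOn (fun m => n * m + (n - a % n) % n)
    · intro m hm
      simp only [Finset.mem_coe, mem_range] at hm
      have hr : (n - a % n) % n < n := Nat.mod_lt _ (by omega)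
      simp only [Finset.mem_coe, mem_filter, mem_range]
      have hda := Nat.div_add_mod a n
      constructor
      · have h2 : n * (m + 1) ≤ n * (N / n) := Nat.mul_le_mul_left n hm
        have h3 : n * (N / n) ≤ N := Nat.mul_div_le N n
        have : n * (m + 1) = n * m + n := by ring
        omega
      · rcases Nat.eq_zero_or_pos (a % n) with h | h
        · have hr0 : (n - a % n) % n = 0 := by rw [h]; simp
          have he : n * m + (n - a % n) % n + a = n * (m + a / n) := by
            rw [hr0]; rw [Nat.mul_add]; omega
          rw [he, Nat.mul_mod_right]
        · have hr0 : (n - a % n) % n = n - a % n := Nat.mod_eq_of_lt (by omega)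
          have he : n * m + (n - a % n) % n + a = n * (m + a / n + 1) := by
            rw [hr0]
            have h2 : a % n < n := Nat.mod_lt _ (by omega)
            have : n * (m + a / n + 1) = n * m + n * (a / n) + n := by ring
            omega
          rw [he, Nat.mul_mod_right]
    · intro m₁ h₁ m₂ h₂ he
      dsimp at he
      have : n * m₁ = n * m₂ := by omega
      exact Nat.eq_of_mul_eq_mul_left (by omega) this
  have h2 : n * (N / n) ≤ n * ((Finset.range N).filter fun k => (k + a) % n = 0).card :=
    Nat.mul_le_mul_left n hcard
  have := Nat.div_add_mod N n
  have := Nat.mod_lt N (show 0 < n by omega)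
  omega

lemma card_filter_fin (N : ℕ) (P : ℕ → Prop) [DecidablePred P] :
    (univ.filter fun k : Fin N => P k.val).card = ((Finset.range N).filter P).card := by
  apply Finset.card_bij (fun k _ => k.val)
  · intro k hk
    simp only [mem_filter, mem_univ, true_and] at hk
    simp only [mem_filter, mem_range]
    exact ⟨k.isLt, hk⟩
  · intro k₁ _ k₂ _ h
    exact Fin.ext h
  · intro m hm
    simp only [mem_filter, mem_range] at hm
    exact ⟨⟨m, hm.1⟩, by simp [hm.2], rfl⟩

lemma zeta_apply (n N : ℕ) (p : Fin N × Fin N) :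
    zeta n N p = if (p.1.val + p.2.val + 2) % n = 0 then p else (p.2, p.1) := rfl

lemma mem_FProw_zeta (n N : ℕ) (j k : Fin N) :
    k ∈ FProw (zeta n N) j ↔ ((k.val + (j.val + 2)) % n = 0 ∨ k = j) := by
  have hc : j.val + k.val + 2 = k.val + (j.val + 2) := by omega
  simp only [FProw, mem_filter, mem_univ, true_and, zeta_apply, hc]
  by_cases h : (k.val + (j.val + 2)) % n = 0
  · simp [h]
  · rw [if_neg h]
    simp only [h, false_or, Prod.ext_iff]
    constructor
    · rintro ⟨h1, _⟩
      exact h1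
    · rintro h1
      exact ⟨h1, h1.symm⟩

lemma mem_TProw_zeta (n N : ℕ) (j k : Fin N) :
    k ∈ TProw (zeta n N) j ↔ (¬(k.val + (j.val + 2)) % n = 0 ∨ k = j) := by
  have hc : j.val + k.val + 2 = k.val + (j.val + 2) := by omega
  simp only [TProw, mem_filter, mem_univ, true_and, zeta_apply, hc]
  by_cases h : (k.val + (j.val + 2)) % n = 0
  · simp only [h, if_pos h, not_true, false_or, Prod.ext_iff]
    constructor
    · rintro ⟨h1, h2⟩; exact h2
    · rintro h1; exact ⟨h1.symm, h1⟩
  · simp [h]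

lemma row_card_bounds (n N : ℕ) (hn : 1 ≤ n) (j : Fin N) :
    ∃ C : ℕ, n * C ≤ N + n ∧ N ≤ n * C + n ∧
      C ≤ (FProw (zeta n N) j).card ∧ (FProw (zeta n N) j).card ≤ C + 1 ∧
      (N - C) ≤ (TProw (zeta n N) j).card ∧ (TProw (zeta n N) j).card ≤ (N - C) + 1 ∧
      C ≤ N := by
  have hCcard := card_filter_fin N (fun k => (k + (j.val + 2)) % n = 0)
  have hcc : (univ.filter fun k : Fin N => ¬ (k.val + (j.val + 2)) % n = 0).card
      = N - (univ.filter fun k : Fin N => (k.val + (j.val + 2)) % n = 0).card := by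
    have h := Finset.card_filter_add_card_filter_not
      (s := (univ : Finset (Fin N))) (p := fun k : Fin N => (k.val + (j.val + 2)) % n = 0)
    rw [Finset.card_univ, Fintype.card_fin] at h
    omega
  refine ⟨(univ.filter fun k : Fin N => (k.val + (j.val + 2)) % n = 0).card,
    ?_, ?_, ?_, ?_, ?_, ?_, ?_⟩
  · rw [hCcard]; exact countUB n (j.val + 2) N hn
  · rw [hCcard]; exact countLB n (j.val + 2) N hn
  · apply Finset.card_le_card
    intro k hk
    rw [mem_FProw_zeta]
    rw [mem_filter] at hk
    exact Or.inl hk.2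
  · have hsub : FProw (zeta n N) j ⊆
        (univ.filter fun k : Fin N => (k.val + (j.val + 2)) % n = 0) ∪ {j} := by
      intro k hk
      rw [mem_FProw_zeta] at hk
      rcases hk with h | h
      · exact Finset.mem_union_left _ (by rw [mem_filter]; exact ⟨mem_univ _, h⟩)
      · exact Finset.mem_union_right _ (by simp [h])
    calc (FProw (zeta n N) j).card ≤ _ := Finset.card_le_card hsub
      _ ≤ _ + 1 := by
          have := Finset.card_union_le
            (univ.filter fun k : Fin N => (k.val + (j.val + 2)) % n = 0) ({j} : Finset (Fin N))
          simpa using this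
  · rw [← hcc]
    apply Finset.card_le_card
    intro k hk
    rw [mem_filter] at hk
    rw [mem_TProw_zeta]
    exact Or.inl hk.2
  · have hsub : TProw (zeta n N) j ⊆
        (univ.filter fun k : Fin N => ¬ (k.val + (j.val + 2)) % n = 0) ∪ {j} := by
      intro k hk
      rw [mem_TProw_zeta] at hk
      rcases hk with h | h
      · exact Finset.mem_union_left _ (by rw [mem_filter]; exact ⟨mem_univ _, h⟩)
      · exact Finset.mem_union_right _ (by simp [h])
    calc (TProw (zeta n N) j).card ≤ _ := Finset.card_le_card hsub
      _ ≤ _ := by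
          have := Finset.card_union_le
            (univ.filter fun k : Fin N => ¬ (k.val + (j.val + 2)) % n = 0) ({j} : Finset (Fin N))
          rw [hcc] at this
          simpa using this
  · calc (univ.filter fun k : Fin N => (k.val + (j.val + 2)) % n = 0).card
        ≤ (univ : Finset (Fin N)).card := Finset.card_le_card (Finset.filter_subset _ _)
      _ = N := by simp

lemma rowlimit_aux (f : (N : ℕ) → Fin N → ℝ) (a : ℝ)
    (h : ∀ N : ℕ, 1 ≤ N → ∀ j : Fin N, |f N j / (N : ℝ) - a| ≤ 2 / (N : ℝ)) :
    RowLimit f a := by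
  intro ε hε
  have h2 : Tendsto (fun N : ℕ => 2 / (N : ℝ)) atTop (nhds 0) :=
    tendsto_const_div_atTop_nhds_zero_nat 2
  have h3 : ∀ᶠ N : ℕ in atTop, 2 / (N : ℝ) < ε := h2.eventually_lt_const hε
  filter_upwards [h3, eventually_ge_atTop 1] with N hN h1 j
  exact lt_of_le_of_lt (h N h1 j) hN

theorem statement17 (n : ℕ) (hn : 1 ≤ n) :
    (∀ N : ℕ, SymmPerm (zeta n N)) ∧
    (∀ (N : ℕ) (p : Fin N × Fin N), zeta n N (zeta n N p) = p) ∧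
    (∀ N : ℕ, GridSet (zeta n N) = ∅) ∧
    RowLimit (fun N j => ((FProw (zeta n N) j).card : ℝ)) (1 / n) ∧
    RowLimit (fun N j => ((TProw (zeta n N) j).card : ℝ)) (((n : ℝ) - 1) / n) := by
  have hn0 : (0 : ℝ) < n := by exact_mod_cast hn
  refine ⟨?_, ?_, ?_, ?_, ?_⟩
  · -- SymmPerm
    intro N p
    rcases p with ⟨j, k⟩
    simp only [zeta_apply]
    by_cases h : (j.val + k.val + 2) % n = 0
    · have h2 : (k.val + j.val + 2) % n = 0 := by rw [Nat.add_comm k.val]; exact h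
      simp [h, h2]
    · have h2 : ¬ (k.val + j.val + 2) % n = 0 := by rw [Nat.add_comm k.val]; exact h
      simp [h, h2]
  · -- involution
    intro N p
    rcases p with ⟨j, k⟩
    simp only [zeta_apply]
    by_cases h : (j.val + k.val + 2) % n = 0
    · simp [h]
    · have h2 : ¬ (k.val + j.val + 2) % n = 0 := by rw [Nat.add_comm k.val]; exact h
      simp [h, h2]
  · -- GridSet empty
    intro N
    rw [Finset.eq_empty_iff_forall_notMem]
    intro p hp
    simp only [GridSet, mem_filter, mem_univ, true_and, GridPt, Finset.mem_sdiff] at hp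
    apply hp.2
    simp only [Finset.mem_insert, Finset.mem_singleton]
    rw [zeta_apply]
    by_cases h : (p.1.val + p.2.val + 2) % n = 0
    · exact Or.inl (by rw [if_pos h])
    · exact Or.inr (by rw [if_neg h])
  · -- FProw row limit
    apply rowlimit_aux
    intro N hN j
    obtain ⟨C, h1, h2, h3, h4, h5, h6, h7⟩ := row_card_bounds n N hn j
    have hN0 : (0 : ℝ) < N := by exact_mod_cast hN
    have heq : ((FProw (zeta n N) j).card : ℝ) / N - 1 / n
        = ((n : ℝ) * (FProw (zeta n N) j).card - N) / (n * N) := by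
      field_simp
    rw [heq, abs_div, abs_of_pos (mul_pos hn0 hN0),
      div_le_div_iff₀ (mul_pos hn0 hN0) hN0]
    have hb : |(n : ℝ) * (FProw (zeta n N) j).card - N| ≤ 2 * n := by
      rw [abs_le]
      constructor
      · have c1 : (N : ℝ) ≤ n * C + n := by exact_mod_cast h2
        have c2 : (C : ℝ) ≤ (FProw (zeta n N) j).card := by exact_mod_cast h3
        nlinarith
      · have c1 : (n : ℝ) * C ≤ N + n := by exact_mod_cast h1
        have c2 : ((FProw (zeta n N) j).card : ℝ) ≤ C + 1 := by exact_mod_cast h4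
        nlinarith
    calc |(n : ℝ) * (FProw (zeta n N) j).card - N| * N
        ≤ (2 * n) * N := mul_le_mul_of_nonneg_right hb hN0.le
      _ = 2 * (n * N) := by ring
  · -- TProw row limit
    apply rowlimit_aux
    intro N hN j
    obtain ⟨C, h1, h2, h3, h4, h5, h6, h7⟩ := row_card_bounds n N hn j
    have hN0 : (0 : ℝ) < N := by exact_mod_cast hN
    have hD : ((N - C : ℕ) : ℝ) = (N : ℝ) - C := by
      have : C ≤ N := h7
      push_cast [this]
      ring
    have heq : ((TProw (zeta n N) j).card : ℝ) / N - ((n : ℝ) - 1) / n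
        = ((n : ℝ) * (TProw (zeta n N) j).card - ((n : ℝ) - 1) * N) / (n * N) := by
      field_simp
    rw [heq, abs_div, abs_of_pos (mul_pos hn0 hN0),
      div_le_div_iff₀ (mul_pos hn0 hN0) hN0]
    have hb : |(n : ℝ) * (TProw (zeta n N) j).card - ((n : ℝ) - 1) * N| ≤ 2 * n := by
      rw [abs_le]
      constructor
      · have c1 : (n : ℝ) * C ≤ N + n := by exact_mod_cast h1
        have c2 : ((N : ℝ) - C) ≤ (TProw (zeta n N) j).card := by
          rw [← hD]; exact_mod_cast h5
        nlinarith
      · have c1 : (N : ℝ) ≤ n * C + n := by exact_mod_cast h2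
        have c2 : ((TProw (zeta n N) j).card : ℝ) ≤ ((N : ℝ) - C) + 1 := by
          rw [← hD]; exact_mod_cast h6
        nlinarith
    calc |(n : ℝ) * (TProw (zeta n N) j).card - ((n : ℝ) - 1) * N| * N
        ≤ (2 * n) * N := mul_le_mul_of_nonneg_right hb hN0.le
      _ = 2 * (n * N) := by ring


end PermutedWigner
end
end
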